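/- The number of extreme points of conv(S^U) is exactly 2^{n-1} Σ_{i=1}^n u_i. -/

import Mathlib

open Finset Set

section aux
variable (n : ℕ) (r : ℝ) (u : Fin n → ℕ)

/-- candidate extreme point -/
noncomputable def zpt (t : Fin n) (p : ℕ) (ε : Fin n → Bool) :
    (Fin n → ℝ) × (Fin n → ℝ) :=
  (fun j => if j = t then (p : ℝ) else if ε j then (u j : ℝ) else 0,
   fun j => if j = t then r / p else 0)

/-- candidate set -/
def Cand : Set ((Fin n → ℝ) × (Fin n → ℝ)) :=
  {w | ∃ t p ε, 1 ≤ p ∧ p ≤ u t ∧ ε t = false ∧ w = zpt n r u t p ε}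

lemma cand_ncard (hn : 1 ≤ n) (hr : 0 < r) (hu : ∀ i, 1 ≤ u i) :
    (Cand n r u).ncard = 2 ^ (n - 1) * ∑ i, u i := by
  classical
  set T := (t : Fin n) × (Fin (u t) × ({j : Fin n // j ≠ t} → Bool)) with hT
  set g : T → (Fin n → ℝ) × (Fin n → ℝ) := fun a =>
    zpt n r u a.1 (a.2.1.1 + 1) (fun j => if h : j = a.1 then false else a.2.2 ⟨j, h⟩) with hg
  have hrange : Cand n r u = Set.range g := by
    ext w
    constructor
    · rintro ⟨t, p, ε, hp1, hp2, het, rfl⟩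
      refine ⟨⟨t, ⟨⟨p - 1, by omega⟩, fun j => ε j.1⟩⟩, ?_⟩
      simp only [hg, zpt]
      have hp' : (p - 1 : ℕ) + 1 = p := by omega
      rw [hp']
      refine Prod.ext (funext fun j => ?_) rfl
      by_cases hj : j = t
      · simp [hj]
      · simp [hj]
    · rintro ⟨⟨t, p, ε⟩, rfl⟩
      exact ⟨t, p.1 + 1, _, by omega, by have := p.2; omega, by simp, rfl⟩
  have hy_ne : ∀ (t : Fin n) (p : ℕ) (ε : Fin n → Bool), 1 ≤ p →
      (zpt n r u t p ε).2 t ≠ 0 := by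
    intro t p ε hp
    have hp0 : (0:ℝ) < (p:ℝ) := by exact_mod_cast Nat.lt_of_lt_of_le Nat.zero_lt_one hp
    simp only [zpt, if_pos rfl, eq_self_iff_true, if_true]
    exact ne_of_gt (div_pos hr hp0)
  have hginj : Function.Injective g := by
    rintro ⟨t1, p1, e1⟩ ⟨t2, p2, e2⟩ h
    have ht : t1 = t2 := by
      by_contra hne
      have h2 := congrFun (congrArg Prod.snd h) t1
      have hz1 : (g ⟨t1,(p1,e1)⟩).2 t1 = r / ((p1.1:ℝ)+1) := by
        simp [hg, zpt]
      have hz2 : (g ⟨t2,(p2,e2)⟩).2 t1 = 0 := by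
        simp [hg, zpt, hne]
      rw [hz1, hz2] at h2
      have hpos : (0:ℝ) < (p1.1:ℝ)+1 := by positivity
      exact absurd h2 (ne_of_gt (div_pos hr hpos))
    subst ht
    have hp : p1 = p2 := by
      have h1 := congrFun (congrArg Prod.fst h) t1
      have hz1 : (g ⟨t1,(p1,e1)⟩).1 t1 = (p1.1:ℝ)+1 := by simp [hg, zpt]
      have hz2 : (g ⟨t1,(p2,e2)⟩).1 t1 = (p2.1:ℝ)+1 := by simp [hg, zpt]
      rw [hz1, hz2] at h1
      have : (p1.1 : ℝ) = p2.1 := by linarith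
      exact Fin.ext (by exact_mod_cast this)
    subst hp
    have he : e1 = e2 := by
      funext j
      have h1 := congrFun (congrArg Prod.fst h) j.1
      have hz1 : (g ⟨t1,(p1,e1)⟩).1 j.1 = (if e1 j then (u j.1 : ℝ) else 0) := by
        simp [hg, zpt, j.2]
      have hz2 : (g ⟨t1,(p1,e2)⟩).1 j.1 = (if e2 j then (u j.1 : ℝ) else 0) := by
        simp [hg, zpt, j.2]
      rw [hz1, hz2] at h1
      have huj : (0:ℝ) < (u j.1 : ℝ) := by exact_mod_cast hu j.1
      cases hc1 : e1 j
      · cases hc2 : e2 j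
        · rfl
        · rw [hc1, hc2, if_neg (by simp), if_pos rfl] at h1
          exact absurd h1.symm (ne_of_gt huj)
      · cases hc2 : e2 j
        · rw [hc1, hc2, if_pos rfl, if_neg (by simp)] at h1
          exact absurd h1 (ne_of_gt huj)
        · rfl
    rw [he]
  rw [hrange, ← Set.image_univ, Set.ncard_image_of_injective _ hginj, Set.ncard_univ,
    Nat.card_eq_fintype_card]
  have hcard2 : ∀ t : Fin n, Fintype.card ({j : Fin n // j ≠ t} → Bool) = 2 ^ (n - 1) := by
    intro t
    rw [Fintype.card_fun, Fintype.card_bool]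
    congr 1
    have : Fintype.card {j : Fin n // j ≠ t} = Fintype.card {j : Fin n // ¬ j = t} := rfl
    rw [this, Fintype.card_subtype_compl, Fintype.card_subtype_eq, Fintype.card_fin]
  rw [Fintype.card_sigma]
  rw [Finset.mul_sum]
  refine Finset.sum_congr rfl fun t _ => ?_
  rw [Fintype.card_prod, Fintype.card_fin, hcard2 t, mul_comm]


def SUdef : Set ((Fin n → ℝ) × (Fin n → ℝ)) :=
  {p | (∀ i, ∃ m : ℕ, p.1 i = (m : ℝ)) ∧ (∀ i, 0 ≤ p.2 i) ∧
      (∀ i, p.1 i ≤ (u i : ℝ)) ∧ r ≤ ∑ i, p.1 i * p.2 i}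

/-- a linear functional on the product space -/
def lfun (A B : Fin n → ℝ) : ((Fin n → ℝ) × (Fin n → ℝ)) →ₗ[ℝ] ℝ where
  toFun w := ∑ j, (A j * w.1 j + B j * w.2 j)
  map_add' w v := by
    rw [← Finset.sum_add_distrib]
    refine Finset.sum_congr rfl fun j _ => ?_
    simp only [Prod.fst_add, Prod.snd_add, Pi.add_apply]
    ring
  map_smul' c w := by
    simp only [RingHom.id_apply, smul_eq_mul, Finset.mul_sum]
    refine Finset.sum_congr rfl fun j _ => ?_
    simp only [Prod.smul_fst, Prod.smul_snd, Pi.smul_apply, smul_eq_mul]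
    ring

lemma lfun_apply (A B : Fin n → ℝ) (w : (Fin n → ℝ) × (Fin n → ℝ)) :
    lfun n A B w = ∑ j, (A j * w.1 j + B j * w.2 j) := rfl

lemma zpt_mem (hr : 0 < r) (t : Fin n) (p : ℕ) (hp1 : 1 ≤ p) (hp2 : p ≤ u t)
    (ε : Fin n → Bool) : zpt n r u t p ε ∈ SUdef n r u := by
  have hP : (0:ℝ) < (p:ℝ) := by exact_mod_cast Nat.lt_of_lt_of_le Nat.zero_lt_one hp1
  refine ⟨fun i => ?_, fun i => ?_, fun i => ?_, ?_⟩
  · by_cases hi : i = t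
    · exact ⟨p, by simp [zpt, hi]⟩
    · by_cases he : ε i
      · exact ⟨u i, by simp [zpt, hi, he]⟩
      · exact ⟨0, by simp [zpt, hi, he]⟩
  · by_cases hi : i = t
    · simp only [zpt, hi, if_pos rfl, eq_self_iff_true, if_true]
      positivity
    · simp [zpt, hi]
  · by_cases hi : i = t
    · simp only [zpt, hi, if_pos rfl, eq_self_iff_true, if_true]
      exact_mod_cast hp2
    · by_cases he : ε i <;> simp [zpt, hi, he]
  · have : ∑ i, (zpt n r u t p ε).1 i * (zpt n r u t p ε).2 i = (p:ℝ) * (r / p) := by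
      rw [Finset.sum_eq_single t]
      · simp [zpt]
      · intro b _ hb
        simp [zpt, hb]
      · simp
    rw [this, mul_div_cancel₀ r (ne_of_gt hP)]

section keymax

variable (t : Fin n) (p : ℕ) (ε : Fin n → Bool)

/-- sum of the bounds -/
noncomputable def Su : ℝ := ∑ j, (u j : ℝ)

noncomputable def Mv : ℝ := Su n u * (Su n u + 2*r) / r + 1

/-- coefficients of the exposing functional -/
noncomputable def Acoef : Fin n → ℝ :=
  fun j => if j = t then -(r/(p:ℝ)^2) else (if ε j then 1 else -1)

noncomputable def Bcoef : Fin n → ℝ := fun j => if j = t then -1 else -(Mv n r u)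

noncomputable def Hterm : Fin n → ℝ :=
  fun j => if j = t then -(2*(r/(p:ℝ))) else (if ε j then (u j : ℝ) else 0)

lemma scalar_tangent (hr : 0 < r) {q P : ℝ} (hq : 0 < q) (hP : 0 < P) :
    -(r/P^2) * q - r/q + 2*(r/P) = -(r*(q-P)^2)/(q*P^2) := by
  field_simp
  ring

lemma lfun_z (hr : 0 < r) (hp1 : 1 ≤ p) :
    lfun n (Acoef n r t p ε) (Bcoef n r u t) (zpt n r u t p ε) = ∑ j, Hterm n r u t p ε j := by
  have hP : (0:ℝ) < (p:ℝ) := by exact_mod_cast Nat.lt_of_lt_of_le Nat.zero_lt_one hp1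
  rw [lfun_apply]
  refine Finset.sum_congr rfl fun j _ => ?_
  by_cases hj : j = t
  · subst hj
    simp only [Acoef, Bcoef, Hterm, zpt, if_pos rfl, eq_self_iff_true, if_true]
    field_simp
    ring
  · by_cases he : ε j <;>
      simp [Acoef, Bcoef, Hterm, zpt, hj, he]

lemma key_max (hr : 0 < r) (hu : ∀ i, 1 ≤ u i)
    (hp1 : 1 ≤ p) (hp2 : p ≤ u t) (w : (Fin n → ℝ) × (Fin n → ℝ)) (hw : w ∈ SUdef n r u) :
    lfun n (Acoef n r t p ε) (Bcoef n r u t) w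
      ≤ lfun n (Acoef n r t p ε) (Bcoef n r u t) (zpt n r u t p ε) ∧
    (lfun n (Acoef n r t p ε) (Bcoef n r u t) w
      = lfun n (Acoef n r t p ε) (Bcoef n r u t) (zpt n r u t p ε) → w = zpt n r u t p ε) := by
  classical
  obtain ⟨hint, hy0, hxu, hsum⟩ := hw
  set x := w.1 with hxdef
  set y := w.2 with hydef
  have hP : (0:ℝ) < (p:ℝ) := by exact_mod_cast Nat.lt_of_lt_of_le Nat.zero_lt_one hp1
  have hx0 : ∀ i, 0 ≤ x i := fun i => by
    obtain ⟨m, hm⟩ := hint i; rw [hm]; positivity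
  have hu0 : ∀ i, (1:ℝ) ≤ (u i : ℝ) := fun i => by exact_mod_cast hu i
  have hsingle : ∀ i : Fin n, (u i : ℝ) ≤ Su n u :=
    fun i => Finset.single_le_sum (f := fun j => (u j : ℝ)) (fun j _ => by positivity)
      (Finset.mem_univ i)
  have hSupos : (0:ℝ) < Su n u := lt_of_lt_of_le one_pos (le_trans (hu0 t) (hsingle t))
  have hxS : ∀ i, x i ≤ Su n u := fun i => le_trans (hxu i) (hsingle i)
  have hMr : Mv n r u * r = Su n u * (Su n u + 2*r) + r := by
    unfold Mv; field_simp
  have hMpos : 0 < Mv n r u := by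
    unfold Mv; positivity
  have hMge : Su n u + 1 ≤ Mv n r u := by
    unfold Mv
    have h2 : Su n u * (Su n u + 2*r)/r = Su n u * Su n u / r + 2 * Su n u := by
      field_simp
    have h3 : 0 ≤ Su n u * Su n u / r := by positivity
    nlinarith [hSupos]
  set A := Acoef n r t p ε with hAdef
  set B := Bcoef n r u t with hBdef
  set Mq := Mv n r u with hMdef
  set Sq := Su n u with hSdef
  have hfz := lfun_z n r u t p ε hr hp1
  have hHnn : ∀ j, j ≠ t → 0 ≤ Hterm n r u t p ε j := by
    intro j hj
    by_cases he : ε j <;> simp [Hterm, hj, he]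
  obtain ⟨mt, hmt⟩ := hint t
  rcases Nat.eq_zero_or_pos mt with hmt0 | hmt1
  · -- case x t = 0 : strict inequality
    have hxt : x t = 0 := by rw [hmt, hmt0]; simp
    have hBy : ∀ j, B j * y j ≤ -((Mq/Sq) * (x j * y j)) := by
      intro j
      by_cases hj : j = t
      · subst hj
        rw [hxt]
        simp only [hBdef, Bcoef, if_pos rfl, eq_self_iff_true, if_true, zero_mul, mul_zero, neg_zero, neg_one_mul]
        linarith [hy0 j]
      · simp only [hBdef, Bcoef, if_neg hj]
        have h1 : Mq/Sq * x j ≤ Mq := by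
          rw [div_mul_eq_mul_div, div_le_iff₀ hSupos]
          nlinarith [hxS j, hMpos]
        have h2 := mul_le_mul_of_nonneg_right h1 (hy0 j)
        nlinarith [hy0 j]
    have hsum1 : ∑ j, B j * y j ≤ -((Mq/Sq) * r) := by
      have c1 : ∑ j, B j * y j ≤ ∑ j, -((Mq/Sq) * (x j * y j)) :=
        Finset.sum_le_sum (fun j _ => hBy j)
      have c2 : ∑ j, -((Mq/Sq) * (x j * y j)) = -((Mq/Sq) * ∑ j, x j * y j) := by
        rw [Finset.mul_sum]
        exact Finset.sum_neg_distrib _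
      have c3 : 0 < Mq/Sq := div_pos hMpos hSupos
      have c4 : (Mq/Sq) * r ≤ (Mq/Sq) * ∑ j, x j * y j :=
        mul_le_mul_of_nonneg_left hsum (le_of_lt c3)
      rw [c2] at c1
      linarith
    have hsum2 : ∑ j, A j * x j ≤ Sq := by
      have : ∑ j, A j * x j ≤ ∑ j, (u j : ℝ) := by
        refine Finset.sum_le_sum fun j _ => ?_
        by_cases hj : j = t
        · subst hj
          rw [hxt, mul_zero]
          linarith [hu0 j]
        · by_cases he : ε j <;> simp only [hAdef, Acoef, if_neg hj, he, if_pos, if_neg,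
            Bool.false_eq_true, if_false, one_mul, neg_one_mul]
          · exact hxu j
          · linarith [hx0 j, hu0 j]
      exact this
    have hLw : lfun n A B w ≤ Sq - Mq/Sq * r := by
      rw [lfun_apply, Finset.sum_add_distrib]
      linarith
    have hfzlb : -(2*r) ≤ lfun n A B (zpt n r u t p ε) := by
      rw [hfz]
      have h1 := Finset.sum_erase_add Finset.univ (Hterm n r u t p ε) (Finset.mem_univ t)
      have h2 : 0 ≤ ∑ j ∈ Finset.univ.erase t, Hterm n r u t p ε j :=
        Finset.sum_nonneg fun j hj => hHnn j (Finset.ne_of_mem_erase hj)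
      have h3 : Hterm n r u t p ε t = -(2*(r/(p:ℝ))) := by simp [Hterm]
      have h4 : r/(p:ℝ) ≤ r := div_le_self (le_of_lt hr) (by exact_mod_cast hp1)
      linarith
    have hstrict : Sq - Mq/Sq * r < -(2*r) := by
      have key : Mq/Sq * r = (Sq * (Sq + 2*r) + r)/Sq := by
        rw [div_mul_eq_mul_div, hMr]
      have key2 : (Sq * (Sq + 2*r) + r)/Sq = Sq + 2*r + r/Sq := by
        field_simp
      have : 0 < r/Sq := div_pos hr hSupos
      rw [key, key2]
      linarith
    have final : lfun n A B w < lfun n A B (zpt n r u t p ε) := by linarith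
    exact ⟨le_of_lt final, fun hq => absurd hq (ne_of_lt final)⟩
  · -- case 1 ≤ x t
    have hxt1 : (1:ℝ) ≤ x t := by
      rw [hmt]; exact_mod_cast hmt1
    have hxt0 : (0:ℝ) < x t := lt_of_lt_of_le one_pos hxt1
    have hxtne : x t ≠ 0 := ne_of_gt hxt0
    set G : Fin n → ℝ := fun j => A j * x j + (if j = t then -(r / x t) else 0) with hGdef
    have hterm1 : ∀ j, A j * x j + B j * y j ≤ A j * x j + -(x j * y j / x t) := by
      intro j
      by_cases hj : j = t
      · subst hj
        have e : x j * y j / x j = y j := by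
          rw [mul_comm, mul_div_assoc, div_self hxtne, mul_one]
        simp only [hBdef, Bcoef, if_pos rfl, eq_self_iff_true, if_true, e, neg_one_mul]
        linarith
      · simp only [hBdef, Bcoef, if_neg hj]
        have hd : x j / x t ≤ Mq :=
          le_trans (div_le_self (hx0 j) hxt1) (le_trans (hxS j) (by linarith))
        have e : x j * y j / x t = (x j / x t) * y j := by ring
        rw [e]
        have := mul_le_mul_of_nonneg_right hd (hy0 j)
        linarith
    have hterm3 : ∀ j, G j ≤ Hterm n r u t p ε j := by
      intro j
      by_cases hj : j = t
      · subst hj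
        simp only [hGdef, hAdef, Acoef, Hterm, if_pos rfl, eq_self_iff_true, if_true]
        have hid := scalar_tangent r hr hxt0 hP
        rw [neg_div] at hid
        have hnn : (0:ℝ) ≤ r*(x j - (p:ℝ))^2/(x j*(p:ℝ)^2) := by positivity
        linarith
      · by_cases he : ε j <;>
          simp only [hGdef, hAdef, Acoef, Hterm, if_neg hj, he, if_pos, if_neg,
            Bool.false_eq_true, if_false, one_mul, neg_one_mul, add_zero]
        · exact hxu j
        · linarith [hx0 j]
    have hT2sum : ∑ j, (A j * x j + -(x j * y j / x t))
        = (∑ j, A j * x j) + -((∑ j, x j * y j)/x t) := by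
      rw [Finset.sum_add_distrib]
      congr 1
      rw [Finset.sum_div]
      exact Finset.sum_neg_distrib _
    have hGsum : ∑ j, G j = (∑ j, A j * x j) + -(r / x t) := by
      rw [hGdef, Finset.sum_add_distrib]
      congr 1
      exact Fintype.sum_ite_eq' t (fun _ => -(r / x t))
    have h12 : lfun n A B w ≤ ∑ j, (A j * x j + -(x j * y j / x t)) := by
      rw [lfun_apply]
      exact Finset.sum_le_sum fun j _ => hterm1 j
    have h23 : ∑ j, (A j * x j + -(x j * y j / x t)) ≤ ∑ j, G j := by
      rw [hT2sum, hGsum]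
      have : r / x t ≤ (∑ j, x j * y j) / x t := (div_le_div_iff_of_pos_right hxt0).mpr hsum
      linarith
    have h34 : ∑ j, G j ≤ ∑ j, Hterm n r u t p ε j :=
      Finset.sum_le_sum fun j _ => hterm3 j
    have hle : lfun n A B w ≤ lfun n A B (zpt n r u t p ε) := by
      rw [hfz]; linarith
    refine ⟨hle, fun hEq => ?_⟩
    rw [hfz] at hEq
    rw [lfun_apply] at hEq h12
    have e12 : ∑ j, (A j * x j + B j * y j) = ∑ j, (A j * x j + -(x j * y j / x t)) := by
      linarith
    have e23 : ∑ j, (A j * x j + -(x j * y j / x t)) = ∑ j, G j := by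
      linarith
    have e34 : ∑ j, G j = ∑ j, Hterm n r u t p ε j := by
      linarith
    have tw1 := (Finset.sum_eq_sum_iff_of_le (fun j (_ : j ∈ Finset.univ) => hterm1 j)).1 e12
    have tw3 := (Finset.sum_eq_sum_iff_of_le (fun j (_ : j ∈ Finset.univ) => hterm3 j)).1 e34
    -- sum x y = r
    have hXY : ∑ j, x j * y j = r := by
      rw [hT2sum, hGsum] at e23
      have h5 : (∑ j, x j * y j) / x t = r / x t := by linarith
      rw [div_eq_div_iff hxtne hxtne] at h5
      exact mul_right_cancel₀ hxtne h5
    -- y j = 0 off t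
    have hyj : ∀ j, j ≠ t → y j = 0 := by
      intro j hj
      have h := tw1 j (Finset.mem_univ j)
      have hb : B j * y j = -(x j * y j / x t) := by linarith
      simp only [hBdef, Bcoef, if_neg hj] at hb
      have e : x j * y j / x t = (x j / x t) * y j := by ring
      rw [e] at hb
      have hfac : x j / x t ≤ Sq := le_trans (div_le_self (hx0 j) hxt1) (hxS j)
      have hz : (Mq - x j / x t) * y j = 0 := by
        rw [sub_mul]; linarith
      rcases mul_eq_zero.mp hz with h0 | h0
      · exfalso; linarith
      · exact h0
    -- x t = p
    have hxtp : x t = (p:ℝ) := by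
      have h := tw3 t (Finset.mem_univ t)
      simp only [hGdef, hAdef, Acoef, Hterm, if_pos rfl, eq_self_iff_true, if_true] at h
      have hid := scalar_tangent r hr hxt0 hP
      rw [neg_div] at hid
      have hz : r*(x t - (p:ℝ))^2/(x t*(p:ℝ)^2) = 0 := by linarith
      rcases div_eq_zero_iff.mp hz with h0 | h0
      · rcases mul_eq_zero.mp h0 with h1 | h1
        · exact absurd h1 (ne_of_gt hr)
        · have := pow_eq_zero_iff (n := 2) (by norm_num) |>.mp h1
          linarith
      · exfalso
        have : (0:ℝ) < x t * (p:ℝ)^2 := by positivity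
        linarith
    -- x j for j ≠ t
    have hxj : ∀ j, j ≠ t → x j = (if ε j then (u j : ℝ) else 0) := by
      intro j hj
      have h := tw3 j (Finset.mem_univ j)
      by_cases he : ε j <;>
        simp only [hGdef, hAdef, Acoef, Hterm, if_neg hj, he, if_pos, if_neg,
          Bool.false_eq_true, if_false, one_mul, neg_one_mul, add_zero] at h ⊢ <;>
        linarith
    -- y t = r / p
    have hyt : y t = r / (p:ℝ) := by
      have hsingle' : ∑ j, x j * y j = x t * y t := by
        refine Finset.sum_eq_single t (fun b _ hb => by rw [hyj b hb, mul_zero]) ?_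
        intro h; exact absurd (Finset.mem_univ t) h
      rw [hsingle', hxtp] at hXY
      rw [eq_div_iff (ne_of_gt hP)]
      linarith [hXY]
    refine Prod.ext ?_ ?_
    · funext j
      by_cases hj : j = t
      · subst hj
        show x j = (zpt n r u j p ε).1 j
        simp only [zpt, if_pos rfl, eq_self_iff_true, if_true]
        exact hxtp
      · show x j = (zpt n r u t p ε).1 j
        simp only [zpt, if_neg hj]
        exact hxj j hj
    · funext j
      by_cases hj : j = t
      · subst hj
        show y j = (zpt n r u j p ε).2 j
        simp only [zpt, if_pos rfl, eq_self_iff_true, if_true]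
        exact hyt
      · show y j = (zpt n r u t p ε).2 j
        simp only [zpt, if_neg hj]
        exact hyj j hj

end keymax

lemma cand_extreme (hr : 0 < r) (hu : ∀ i, 1 ≤ u i) :
    Cand n r u ⊆ (convexHull ℝ (SUdef n r u)).extremePoints ℝ := by
  rintro w ⟨t, p, ε, hp1, hp2, het, rfl⟩
  set SU := SUdef n r u with hSUd
  set L := lfun n (Acoef n r t p ε) (Bcoef n r u t) with hLdef
  set z := zpt n r u t p ε with hzdef
  have hzSU : z ∈ SU := zpt_mem n r u hr t p hp1 hp2 ε
  have hmax := fun w hw => key_max n r u t p ε hr hu hp1 hp2 w hw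
  have hhalf : convexHull ℝ SU ⊆ {v | L v ≤ L z} :=
    convexHull_min (fun v hv => (hmax v hv).1) (convex_halfSpace_le (LinearMap.isLinear L) _)
  have hface : ∀ v ∈ convexHull ℝ SU, L v = L z → v = z := by
    intro v hv hLv
    rw [_root_.convexHull_eq] at hv
    obtain ⟨ι, s, wgt, pts, hw0, hw1, hpts, hcm⟩ := hv
    have hcm' : v = ∑ i ∈ s, wgt i • pts i := by
      rw [← hcm, Finset.centerMass_eq_of_sum_1 _ _ hw1]
    have hLsum : ∑ i ∈ s, wgt i * L (pts i) = L z := by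
      rw [← hLv, hcm', map_sum]
      exact Finset.sum_congr rfl fun i _ => by rw [map_smul, smul_eq_mul]
    have h1 : ∀ i ∈ s, wgt i * L (pts i) ≤ wgt i * L z :=
      fun i hi => mul_le_mul_of_nonneg_left ((hmax _ (hpts i hi)).1) (hw0 i hi)
    have h2 : ∑ i ∈ s, wgt i * L z = L z := by
      rw [← Finset.sum_mul, hw1, one_mul]
    have hall := (Finset.sum_eq_sum_iff_of_le h1).1 (by rw [hLsum, h2])
    have hterm : ∀ i ∈ s, wgt i • pts i = wgt i • z := by
      intro i hi
      rcases eq_or_ne (wgt i) 0 with h | h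
      · rw [h, zero_smul, zero_smul]
      · rw [(hmax _ (hpts i hi)).2 (mul_left_cancel₀ h (hall i hi))]
    rw [hcm', Finset.sum_congr rfl hterm, ← Finset.sum_smul, hw1, one_smul]
  refine mem_extremePoints.mpr ⟨subset_convexHull ℝ _ hzSU, ?_⟩
  intro x1 hx1 x2 hx2 hseg
  obtain ⟨a, b, ha, hb, hab, hy⟩ := hseg
  have hL1 : L x1 ≤ L z := hhalf hx1
  have hL2 : L x2 ≤ L z := hhalf hx2
  have hLz : a * L x1 + b * L x2 = L z := by
    rw [← hy, map_add, map_smul, map_smul, smul_eq_mul, smul_eq_mul]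
  have h3 : a * L z + b * L z = L z := by rw [← add_mul, hab, one_mul]
  have e1 : L x1 = L z := by
    by_contra hne
    have hlt : L x1 < L z := lt_of_le_of_ne hL1 hne
    linarith [mul_lt_mul_of_pos_left hlt ha, mul_le_mul_of_nonneg_left hL2 (le_of_lt hb)]
  have e2 : L x2 = L z := by
    by_contra hne
    have hlt : L x2 < L z := lt_of_le_of_ne hL2 hne
    linarith [mul_lt_mul_of_pos_left hlt hb, mul_le_mul_of_nonneg_left hL1 (le_of_lt ha)]
  exact ⟨hface x1 hx1 e1, hface x2 hx2 e2⟩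

lemma pert_y (w : (Fin n → ℝ) × (Fin n → ℝ)) (hw : w ∈ SUdef n r u) (c : Fin n → ℝ)
    (h1 : ∀ i, 0 ≤ w.2 i + c i) (h2 : r ≤ ∑ i, w.1 i * (w.2 i + c i)) :
    w + ((0 : Fin n → ℝ), c) ∈ SUdef n r u := by
  obtain ⟨hint, hy0, hxu, hsum⟩ := hw
  refine ⟨fun i => ?_, fun i => ?_, fun i => ?_, ?_⟩
  · obtain ⟨m, hm⟩ := hint i
    exact ⟨m, by simpa using hm⟩
  · simpa using h1 i
  · simpa using hxu i
  · simpa using h2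

lemma pert_x (w : (Fin n → ℝ) × (Fin n → ℝ)) (hw : w ∈ SUdef n r u) (c : Fin n → ℝ)
    (h1 : ∀ i, ∃ m : ℕ, w.1 i + c i = (m : ℝ)) (h2 : ∀ i, w.1 i + c i ≤ (u i : ℝ))
    (h3 : r ≤ ∑ i, (w.1 i + c i) * w.2 i) :
    w + (c, (0 : Fin n → ℝ)) ∈ SUdef n r u := by
  obtain ⟨hint, hy0, hxu, hsum⟩ := hw
  refine ⟨fun i => by simpa using h1 i, fun i => by simpa using hy0 i,
    fun i => by simpa using h2 i, by simpa using h3⟩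

lemma single_sum (x : Fin n → ℝ) (j : Fin n) (e : ℝ) :
    ∑ i, x i * (Pi.single j e : Fin n → ℝ) i = x j * e := by
  classical
  rw [Finset.sum_eq_single j]
  · rw [Pi.single_eq_same]
  · intro b _ hb
    rw [Pi.single_eq_of_ne hb, mul_zero]
  · intro h; exact absurd (Finset.mem_univ j) h

lemma split_sum (x y c : Fin n → ℝ) :
    ∑ i, x i * (y i + c i) = (∑ i, x i * y i) + ∑ i, x i * c i := by
  rw [← Finset.sum_add_distrib]
  exact Finset.sum_congr rfl fun i _ => by ring

lemma extreme_subset (hr : 0 < r) (hu : ∀ i, 1 ≤ u i) :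
    (convexHull ℝ (SUdef n r u)).extremePoints ℝ ⊆ Cand n r u := by
  classical
  intro w hw
  have hwSU : w ∈ SUdef n r u := extremePoints_convexHull_subset hw
  by_contra hnc
  suffices hd : ∃ d : (Fin n → ℝ) × (Fin n → ℝ), d ≠ 0 ∧
      w + d ∈ SUdef n r u ∧ w - d ∈ SUdef n r u by
    obtain ⟨d, hd0, h1, h2⟩ := hd
    have hseg : w ∈ openSegment ℝ (w + d) (w - d) := by
      refine ⟨1/2, 1/2, by norm_num, by norm_num, by norm_num, ?_⟩
      module
    have := (hw.2 (subset_convexHull ℝ _ h1) (subset_convexHull ℝ _ h2) hseg)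
    apply hd0
    have h3 := congrArg (· - w) this
    simpa using h3
  obtain ⟨hint, hy0, hxu, hsum⟩ := hwSU
  set x := w.1 with hxdef
  set y := w.2 with hydef
  choose m hm using hint
  have hwSU' : w ∈ SUdef n r u := ⟨fun i => ⟨m i, hm i⟩, hy0, hxu, hsum⟩
  have hx0 : ∀ i, 0 ≤ x i := fun i => by rw [hm i]; positivity
  have hsingle_ne : ∀ (j : Fin n) (e : ℝ), e ≠ 0 → (Pi.single j e : Fin n → ℝ) ≠ 0 := by
    intro j e he h
    have := congrFun h j
    rw [Pi.single_eq_same] at this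
    exact he this
  by_cases hA : ∃ j, 0 < y j ∧ x j = 0
  · obtain ⟨j, hyj, hxj⟩ := hA
    refine ⟨((0 : Fin n → ℝ), (Pi.single j (y j) : Fin n → ℝ)), ?_, ?_, ?_⟩
    · intro h
      exact hsingle_ne j (y j) (ne_of_gt hyj) (congrArg Prod.snd h)
    · refine pert_y n r u w hwSU' _ (fun i => ?_) ?_
      · by_cases hi : i = j
        · subst hi; rw [Pi.single_eq_same]; linarith
        · rw [Pi.single_eq_of_ne hi, add_zero]; exact hy0 i
      · simp only [← hxdef, ← hydef]
        rw [split_sum, single_sum, hxj, zero_mul, add_zero]; exact hsum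
    · rw [sub_eq_add_neg, show -((0 : Fin n → ℝ), (Pi.single j (y j) : Fin n → ℝ)) =
        ((0 : Fin n → ℝ), (Pi.single j (-(y j)) : Fin n → ℝ)) from by
          rw [Prod.neg_mk, neg_zero, ← Pi.single_neg]]
      refine pert_y n r u w hwSU' _ (fun i => ?_) ?_
      · by_cases hi : i = j
        · subst hi; rw [Pi.single_eq_same]; linarith
        · rw [Pi.single_eq_of_ne hi, add_zero]; exact hy0 i
      · simp only [← hxdef, ← hydef]
        rw [split_sum, single_sum, hxj, zero_mul, add_zero]; exact hsum
  · push_neg at hA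
    have hy1 : ∀ j, 0 < y j → x j ≠ 0 := fun j h => hA j h
    by_cases hB : r < ∑ i, x i * y i
    · -- slack in the constraint
      have hex : ∃ j, 0 < x j * y j := by
        by_contra hno
        push_neg at hno
        have : ∑ i, x i * y i ≤ 0 := Finset.sum_nonpos fun i _ => hno i
        linarith
      obtain ⟨j, hj⟩ := hex
      have hyj : 0 < y j := by
        rcases lt_or_eq_of_le (hy0 j) with h | h
        · exact h
        · exfalso; rw [← h, mul_zero] at hj; exact lt_irrefl 0 hj
      have hxj : 0 < x j := by
        rcases lt_or_eq_of_le (hx0 j) with h | h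
        · exact h
        · exfalso; rw [← h, zero_mul] at hj; exact lt_irrefl 0 hj
      set δ := min (y j) ((∑ i, x i * y i - r) / x j) with hδ
      have hδpos : 0 < δ := lt_min hyj (div_pos (by linarith) hxj)
      have hδy : δ ≤ y j := min_le_left _ _
      have hδs : x j * δ ≤ ∑ i, x i * y i - r := by
        have h1 : δ ≤ (∑ i, x i * y i - r) / x j := min_le_right _ _
        rw [le_div_iff₀ hxj] at h1
        linarith [h1]
      refine ⟨((0 : Fin n → ℝ), (Pi.single j δ : Fin n → ℝ)), ?_, ?_, ?_⟩
      · intro h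
        exact hsingle_ne j δ (ne_of_gt hδpos) (congrArg Prod.snd h)
      · refine pert_y n r u w hwSU' _ (fun i => ?_) ?_
        · by_cases hi : i = j
          · subst hi; rw [Pi.single_eq_same]; linarith [hy0 i]
          · rw [Pi.single_eq_of_ne hi, add_zero]; exact hy0 i
        · simp only [← hxdef, ← hydef]
          rw [split_sum, single_sum]
          nlinarith [mul_nonneg (le_of_lt hxj) (le_of_lt hδpos)]
      · rw [sub_eq_add_neg, show -((0 : Fin n → ℝ), (Pi.single j δ : Fin n → ℝ)) =
          ((0 : Fin n → ℝ), (Pi.single j (-δ) : Fin n → ℝ)) from by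
            rw [Prod.neg_mk, neg_zero, ← Pi.single_neg]]
        refine pert_y n r u w hwSU' _ (fun i => ?_) ?_
        · by_cases hi : i = j
          · subst hi; rw [Pi.single_eq_same]; linarith
          · rw [Pi.single_eq_of_ne hi, add_zero]; exact hy0 i
        · simp only [← hxdef, ← hydef]
          rw [split_sum, single_sum]
          nlinarith
    · have hsum_eq : ∑ i, x i * y i = r := le_antisymm (not_lt.mp hB) hsum
      have hex : ∃ j, 0 < y j := by
        by_contra hno
        push_neg at hno
        have h0 : ∀ i, y i = 0 := fun i => le_antisymm (hno i) (hy0 i)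
        have : ∑ i, x i * y i = 0 :=
          Finset.sum_eq_zero fun i _ => by rw [h0 i, mul_zero]
        rw [hsum_eq] at this
        linarith
      obtain ⟨t, hyt⟩ := hex
      have hxt : 0 < x t := by
        rcases lt_or_eq_of_le (hx0 t) with h | h
        · exact h
        · exact absurd h.symm (hy1 t hyt)
      by_cases hC : ∃ k, k ≠ t ∧ 0 < y k
      · -- two support points
        obtain ⟨k, hkt, hyk⟩ := hC
        have hxk : 0 < x k := by
          rcases lt_or_eq_of_le (hx0 k) with h | h
          · exact h
          · exact absurd h.symm (hy1 k hyk)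
        set δ := min (x t * y t) (x k * y k) with hδ
        have hδpos : 0 < δ := lt_min (mul_pos hxt hyt) (mul_pos hxk hyk)
        have hδt : δ ≤ x t * y t := min_le_left _ _
        have hδk : δ ≤ x k * y k := min_le_right _ _
        have hdivt : δ / x t ≤ y t := by rw [div_le_iff₀ hxt]; nlinarith
        have hdivk : δ / x k ≤ y k := by rw [div_le_iff₀ hxk]; nlinarith
        set c : Fin n → ℝ := (Pi.single t (δ / x t) : Fin n → ℝ) +
          (Pi.single k (-(δ / x k)) : Fin n → ℝ) with hc
        have hct : c t = δ / x t := by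
          rw [hc, Pi.add_apply, Pi.single_eq_same, Pi.single_eq_of_ne (Ne.symm hkt), add_zero]
        have hck : c k = -(δ / x k) := by
          rw [hc, Pi.add_apply, Pi.single_eq_same, Pi.single_eq_of_ne hkt, zero_add]
        have hci : ∀ i, i ≠ t → i ≠ k → c i = 0 := by
          intro i h1 h2
          rw [hc, Pi.add_apply, Pi.single_eq_of_ne h1, Pi.single_eq_of_ne h2, add_zero]
        have hxc : ∑ i, x i * c i = 0 := by
          have h1 : ∀ i, x i * c i = x i * (Pi.single t (δ / x t) : Fin n → ℝ) i
              + x i * (Pi.single k (-(δ / x k)) : Fin n → ℝ) i := fun i => by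
            rw [hc, Pi.add_apply]; ring
          rw [Finset.sum_congr rfl fun i _ => h1 i, Finset.sum_add_distrib,
            single_sum, single_sum]
          field_simp
          ring
        have hcneg : (-c : Fin n → ℝ) = (Pi.single t (-(δ / x t)) : Fin n → ℝ) +
            (Pi.single k (δ / x k) : Fin n → ℝ) := by
          rw [hc, neg_add, ← Pi.single_neg, ← Pi.single_neg, neg_neg]
        have hxc' : ∑ i, x i * (-c) i = 0 := by
          have h1 : ∀ i, x i * (-c) i = -(x i * c i) := fun i => by
            rw [Pi.neg_apply]; ring
          rw [Finset.sum_congr rfl fun i _ => h1 i, Finset.sum_neg_distrib, hxc, neg_zero]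
        refine ⟨((0 : Fin n → ℝ), c), ?_, ?_, ?_⟩
        · intro h
          have h2 : c t = 0 := by simpa using congrFun (congrArg Prod.snd h) t
          rw [hct] at h2
          exact (ne_of_gt (div_pos hδpos hxt)) h2
        · refine pert_y n r u w hwSU' _ (fun i => ?_) ?_
          · by_cases h1 : i = t
            · subst h1; rw [hct]
              have h3 := div_pos hδpos hxt
              linarith [hy0 i]
            · by_cases h2 : i = k
              · subst h2; rw [hck]; linarith
              · rw [hci i h1 h2, add_zero]; exact hy0 i
          · simp only [← hxdef, ← hydef]
            rw [split_sum, hxc, add_zero]; exact hsum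
        · rw [sub_eq_add_neg, show -((0 : Fin n → ℝ), c) = ((0 : Fin n → ℝ), -c) from by
            rw [Prod.neg_mk, neg_zero]]
          refine pert_y n r u w hwSU' _ (fun i => ?_) ?_
          · by_cases h1 : i = t
            · subst h1; rw [Pi.neg_apply, hct]; linarith
            · by_cases h2 : i = k
              · subst h2; rw [Pi.neg_apply, hck, neg_neg]
                have h3 := div_pos hδpos hxk
                linarith [hy0 i]
              · rw [Pi.neg_apply, hci i h1 h2, neg_zero, add_zero]; exact hy0 i
          · simp only [← hxdef, ← hydef]
            rw [split_sum, hxc', add_zero]; exact hsum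
      · -- unique support point : w must be a candidate, contradiction
        push_neg at hC
        have hD : ∀ k, k ≠ t → y k = 0 := fun k hk =>
          le_antisymm (hC k hk) (hy0 k)
        by_cases hE : ∃ j, j ≠ t ∧ x j ≠ 0 ∧ x j ≠ (u j : ℝ)
        · obtain ⟨j, hjt, hxj0, hxju⟩ := hE
          have hyj0 : y j = 0 := hD j hjt
          have hmj1 : 1 ≤ m j := by
            rcases Nat.eq_zero_or_pos (m j) with h | h
            · exact absurd (by rw [hm j, h]; simp) hxj0
            · exact h
          have hmju : m j < u j := by
            have h1 : (m j : ℝ) ≤ u j := by rw [← hm j]; exact hxu j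
            have h2 : m j ≤ u j := by exact_mod_cast h1
            rcases lt_or_eq_of_le h2 with h | h
            · exact h
            · exact absurd (by rw [hm j, h]) hxju
          have hys : ∀ (c : Fin n → ℝ), (∀ i, c i ≠ 0 → i = j) →
              ∑ i, (x i + c i) * y i = ∑ i, x i * y i := by
            intro c hcc
            refine Finset.sum_congr rfl fun i _ => ?_
            rcases eq_or_ne (c i) 0 with h | h
            · rw [h, add_zero]
            · rw [hcc i h, hyj0, mul_zero, mul_zero]
          refine ⟨((Pi.single j (1:ℝ) : Fin n → ℝ), (0 : Fin n → ℝ)), ?_, ?_, ?_⟩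
          · intro h
            exact hsingle_ne j 1 one_ne_zero (congrArg Prod.fst h)
          · refine pert_x n r u w hwSU' _ (fun i => ?_) (fun i => ?_) ?_
            · simp only [← hxdef]
              by_cases hi : i = j
              · subst hi
                exact ⟨m i + 1, by rw [hm i, Pi.single_eq_same]; push_cast; ring⟩
              · exact ⟨m i, by rw [hm i, Pi.single_eq_of_ne hi, add_zero]⟩
            · simp only [← hxdef]
              by_cases hi : i = j
              · subst hi
                rw [hm i, Pi.single_eq_same]
                have : m i + 1 ≤ u i := hmju
                exact_mod_cast this
              · rw [Pi.single_eq_of_ne hi, add_zero]; exact hxu i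
            · simp only [← hxdef, ← hydef]
              rw [hys _ (fun i hi => by
                by_contra hij
                exact hi (Pi.single_eq_of_ne hij 1))]
              exact hsum
          · rw [sub_eq_add_neg, show -((Pi.single j (1:ℝ) : Fin n → ℝ), (0 : Fin n → ℝ)) =
              ((Pi.single j (-1:ℝ) : Fin n → ℝ), (0 : Fin n → ℝ)) from by
                rw [Prod.neg_mk, neg_zero, ← Pi.single_neg]]
            refine pert_x n r u w hwSU' _ (fun i => ?_) (fun i => ?_) ?_
            · simp only [← hxdef]
              by_cases hi : i = j
              · subst hi
                refine ⟨m i - 1, ?_⟩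
                rw [hm i, Pi.single_eq_same]
                push_cast [Nat.cast_sub hmj1]
                ring
              · exact ⟨m i, by rw [hm i, Pi.single_eq_of_ne hi, add_zero]⟩
            · simp only [← hxdef]
              by_cases hi : i = j
              · subst hi
                rw [Pi.single_eq_same]
                linarith [hxu i]
              · rw [Pi.single_eq_of_ne hi, add_zero]; exact hxu i
            · simp only [← hxdef, ← hydef]
              rw [hys _ (fun i hi => by
                by_contra hij
                exact hi (Pi.single_eq_of_ne hij (-1)))]
              exact hsum
        · -- w is a candidate
          exfalso
          push_neg at hE
          have hxt_ne : x t ≠ 0 := hy1 t hyt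
          have hmt1 : 1 ≤ m t := by
            rcases Nat.eq_zero_or_pos (m t) with h | h
            · exact absurd (by rw [hm t, h]; simp) hxt_ne
            · exact h
          have hmtu : m t ≤ u t := by
            have h1 : (m t : ℝ) ≤ u t := by rw [← hm t]; exact hxu t
            exact_mod_cast h1
          set ε : Fin n → Bool := fun i => if i = t then false
            else decide (x i = (u i : ℝ)) with hε
          have hwz : w = zpt n r u t (m t) ε := by
            refine Prod.ext ?_ ?_
            · funext i
              show x i = (zpt n r u t (m t) ε).1 i
              by_cases hi : i = t
              · subst hi
                simp only [zpt, if_pos rfl, eq_self_iff_true, if_true]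
                exact hm i
              · simp only [zpt, if_neg hi]
                by_cases hxi : x i = (u i : ℝ)
                · rw [show ε i = true from by simp [hε, hi, hxi]]
                  simpa using hxi
                · have hx0i : x i = 0 := by
                    by_contra hne
                    exact hxi (hE i hi hne)
                  rw [show ε i = false from by simp [hε, hi, hxi]]
                  simpa using hx0i
            · funext i
              show y i = (zpt n r u t (m t) ε).2 i
              by_cases hi : i = t
              · subst hi
                simp only [zpt, if_pos rfl, eq_self_iff_true, if_true]
                have hsingle' : ∑ i', x i' * y i' = x i * y i := by
                  refine Finset.sum_eq_single i (fun b _ hb => by rw [hD b hb, mul_zero]) ?_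
                  intro h; exact absurd (Finset.mem_univ i) h
                have hmne : ((m i : ℝ)) ≠ 0 := by
                  have : (0:ℝ) < (m i : ℝ) := by exact_mod_cast hmt1
                  exact ne_of_gt this
                rw [eq_div_iff hmne]
                rw [hsingle', hm i] at hsum_eq
                linarith [hsum_eq]
              · simp only [zpt, if_neg hi]
                exact hD i hi
          exact hnc ⟨t, m t, ε, hmt1, hmtu, by simp [hε], hwz⟩

end aux



theorem stmt_9 (n : ℕ) (hn : 1 ≤ n) (r : ℝ) (hr : 0 < r)
    (u : Fin n → ℕ) (hu : ∀ i, 1 ≤ u i)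
    (SU : Set ((Fin n → ℝ) × (Fin n → ℝ)))
    (hSU : SU = {p | (∀ i, ∃ m : ℕ, p.1 i = (m : ℝ)) ∧ (∀ i, 0 ≤ p.2 i) ∧
      (∀ i, p.1 i ≤ (u i : ℝ)) ∧ r ≤ ∑ i, p.1 i * p.2 i}) :
    ((convexHull ℝ SU).extremePoints ℝ).ncard = 2 ^ (n - 1) * ∑ i, u i := by
  have hSU' : SU = SUdef n r u := hSU
  rw [hSU']
  have hE : (convexHull ℝ (SUdef n r u)).extremePoints ℝ = Cand n r u :=
    subset_antisymm (extreme_subset n r u hr hu) (cand_extreme n r u hr hu)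
  rw [hE]
  exact cand_ncard n r u hn hr hu
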